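/- arXiv:2503.02864 — 5 statements merged into one kernel-verified Lean document; each statement's English description precedes it below -/
import Mathlib

section
/- Let σ be a permutation of a finite type with cycle type {{ℓ_1, …, ℓ_k}} and let x be a natural number. Then the cycle type of σ^x is the multiset obtained from {{ℓ_1, …, ℓ_k}} by replacing each ℓ_t with gcd(x, ℓ_t) copies of ℓ_t / gcd(x, ℓ_t), and then discarding all entries equal to 1. -/
open Equiv Equiv.Perm

private lemma pow_cycleType_of_isCycle {α : Type*} [Fintype α] [DecidableEq α]
    {σ : Equiv.Perm α} (hσ : σ.IsCycle) (x : ℕ) :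
    (σ ^ x).cycleType =
      Multiset.filter (fun c => c ≠ 1)
        (Multiset.replicate (Nat.gcd x σ.support.card)
          (σ.support.card / Nat.gcd x σ.support.card)) := by
  set n := σ.support.card with hn
  have hord : orderOf σ = n := hσ.orderOf
  have hn2 : 2 ≤ n := hσ.two_le_card_support
  set g := Nat.gcd x n with hg
  by_cases hdvd : n ∣ x
  · have hgn : g = n := Nat.dvd_antisymm (Nat.gcd_dvd_right x n) (Nat.dvd_gcd hdvd dvd_rfl)
    have h1 : σ ^ x = 1 := orderOf_dvd_iff_pow_eq_one.mp (hord ▸ hdvd)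
    have : n / g = 1 := by
      rw [hgn, Nat.div_self (by omega)]
    rw [h1, Equiv.Perm.cycleType_one, this]
    rw [Multiset.filter_eq_nil.mpr]
    intro a ha
    simp [Multiset.eq_of_mem_replicate ha]
  · have hgpos : 0 < g := Nat.gcd_pos_of_pos_right x (by omega)
    have hgdvd : g ∣ n := Nat.gcd_dvd_right x n
    have hne : n / g ≠ 1 := by
      intro h
      apply hdvd
      have : n = g := by
        obtain ⟨c, hc⟩ := hgdvd
        rw [hc, Nat.mul_div_cancel_left _ hgpos] at h
        rw [hc, h, mul_one]
      rw [this]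
      exact Nat.gcd_dvd_left x n
    have hdivpos : 0 < n / g := Nat.div_pos (Nat.le_of_dvd (by omega) hgdvd) hgpos
    have hall : ∀ m ∈ (σ ^ x).cycleType, m = n / g := by
      intro m hm
      have hub : m ∣ n / g := by
        have := Equiv.Perm.dvd_of_mem_cycleType hm
        rwa [orderOf_pow, hord, Nat.gcd_comm] at this
      have hlb : n / g ∣ m := by
        obtain ⟨c, τ, hct, hd, hc, hcard⟩ := Equiv.Perm.mem_cycleType_iff.mp hm
        obtain ⟨y, hy⟩ := hc.nonempty_support
        have hyτ : τ y = y := by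
          by_contra h
          exact (Equiv.Perm.disjoint_iff_eq_or_eq.mp hd y).elim
            (fun h' => (Equiv.Perm.mem_support.mp hy) h') h
        have hfix : ((σ ^ x) ^ m) y = y := by
          rw [hct, (hd.commute).mul_pow]
          have hτm : (τ ^ m) y = y := Equiv.Perm.pow_apply_eq_self_of_apply_eq_self hyτ m
          have hcm : (c ^ m) y = y := by
            rw [← hcard, ← hc.orderOf, pow_orderOf_eq_one]; rfl
          simp [Equiv.Perm.mul_apply, hτm, hcm]
        have hyσ : σ y ≠ y := by
          have : y ∈ (σ ^ x).support := by
            rw [hct]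
            exact (Equiv.Perm.Disjoint.support_mul hd) ▸ Finset.mem_union_left _ hy
          have := Equiv.Perm.support_pow_le σ x this
          exact Equiv.Perm.mem_support.mp this
        have hone : σ ^ (x * m) = 1 := by
          rw [← pow_mul] at hfix
          exact (hσ.pow_eq_one_iff' hyσ).mpr hfix
        have hnd : n ∣ x * m := hord ▸ orderOf_dvd_iff_pow_eq_one.mpr hone
        have hxg : x = g * (x / g) := (Nat.mul_div_cancel' (Nat.gcd_dvd_left x n)).symm
        have hng : n = g * (n / g) := (Nat.mul_div_cancel' hgdvd).symm
        have h2 : g * (n / g) ∣ g * ((x / g) * m) := by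
          rw [← hng, ← mul_assoc, ← hxg]
          exact hnd
        have h3 : n / g ∣ (x / g) * m := (mul_dvd_mul_iff_left hgpos.ne').mp h2
        have hcop : Nat.Coprime (x / g) (n / g) := Nat.coprime_div_gcd_div_gcd
          (Nat.gcd_pos_of_pos_right x (by omega))
        exact hcop.symm.dvd_of_dvd_mul_left h3
      exact Nat.dvd_antisymm hub hlb
    have heq : (σ ^ x).cycleType =
        Multiset.replicate (Multiset.card (σ ^ x).cycleType) (n / g) :=
      Multiset.eq_replicate_of_mem hall
    have hsum : (σ ^ x).cycleType.sum = n := by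
      rw [Equiv.Perm.sum_cycleType]
      congr 1
      exact hσ.support_pow_eq_iff.mpr (by rwa [hord])
    have hcardmul : Multiset.card (σ ^ x).cycleType * (n / g) = n := by
      rw [heq, Multiset.sum_replicate, smul_eq_mul] at hsum
      exact hsum
    have hcard : Multiset.card (σ ^ x).cycleType = g := by
      have hng : g * (n / g) = n := Nat.mul_div_cancel' hgdvd
      exact Nat.eq_of_mul_eq_mul_right hdivpos (hcardmul.trans hng.symm)
    rw [heq, hcard]
    exact (Multiset.filter_eq_self.mpr fun a ha =>
      (Multiset.eq_of_mem_replicate ha) ▸ hne).symm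

/-- If `σ` has cycle type `{{ℓ_1, …, ℓ_k}}`, then the cycle type of `σ ^ x` is obtained by
replacing each `ℓ_t` with `gcd(x, ℓ_t)` copies of `ℓ_t / gcd(x, ℓ_t)` and discarding the
entries equal to `1`. -/
theorem pow_cycleType {α : Type*} [Fintype α] [DecidableEq α]
    (σ : Equiv.Perm α) (x : ℕ) :
    (σ ^ x).cycleType =
      Multiset.filter (fun c => c ≠ 1)
        (σ.cycleType.bind fun ℓ =>
          Multiset.replicate (Nat.gcd x ℓ) (ℓ / Nat.gcd x ℓ)) := by
  induction σ using Equiv.Perm.cycle_induction_on with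
  | base_one => simp [one_pow, Equiv.Perm.cycleType_one]
  | base_cycles σ hσ =>
    rw [hσ.cycleType]
    simp only [Multiset.coe_singleton, Multiset.singleton_bind]
    exact pow_cycleType_of_isCycle hσ x
  | induction_disjoint σ τ hd hc hσ hτ =>
    rw [hd.commute.mul_pow, Equiv.Perm.Disjoint.cycleType_mul (hd.pow_disjoint_pow x x), hd.cycleType_mul,
      Multiset.add_bind, Multiset.filter_add, hσ, hτ]
end

section
/- Let π be a permutation of a finite type and let i be a natural number. Then orderOf π = orderOf (π^i) if and only if π and π^i have the same cycle type. -/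
open Equiv Equiv.Perm

private lemma list_prod_pow_of_commute {M : Type*} [Monoid M] (l : List M)
    (h : l.Pairwise Commute) (i : ℕ) : l.prod ^ i = (l.map (· ^ i)).prod := by
  induction l with
  | nil => simp
  | cons x l ih =>
    rw [List.pairwise_cons] at h
    rw [List.prod_cons, List.map_cons, List.prod_cons,
      (Commute.list_prod_right l x h.1).mul_pow, ih h.2]

private lemma cycleType_pow_coprime {α : Type*} [Fintype α] [DecidableEq α]
    (π : Equiv.Perm α) {i : ℕ} (h : Nat.Coprime i (orderOf π)) :
    (π ^ i).cycleType = π.cycleType := by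
  obtain ⟨l, h0, h1, h2⟩ := π.truncCycleFactors.out
  have hct : π.cycleType = l.map (Finset.card ∘ support) := cycleType_eq l h0 h1 h2
  have hcop : ∀ c ∈ l, Nat.Coprime i (orderOf c) := by
    intro c hc
    refine h.coprime_dvd_right ?_
    rw [(h1 c hc).orderOf]
    exact dvd_of_mem_cycleType (by rw [hct]; exact Multiset.mem_coe.mpr (List.mem_map_of_mem (f := Finset.card ∘ support) hc))
  have hsupp : ∀ c ∈ l, (c ^ i).support = c.support := fun c hc =>
    support_pow_coprime (hcop c hc)
  have h0' : (l.map (· ^ i)).prod = π ^ i := by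
    rw [← list_prod_pow_of_commute l (h2.imp Disjoint.commute) i, h0]
  have h1' : ∀ c ∈ l.map (· ^ i), c.IsCycle := by
    intro c hc
    obtain ⟨d, hd, rfl⟩ := List.mem_map.mp hc
    exact (h1 d hd).pow_iff.mpr (hcop d hd)
  have h2' : (l.map (· ^ i)).Pairwise Perm.Disjoint := by
    refine List.Pairwise.map _ ?_ (h2.and (List.pairwise_of_forall_mem_list
      (fun a ha b hb => And.intro (hsupp a ha) (hsupp b hb))))
    rintro a b ⟨hab, ha, hb⟩
    rw [Perm.disjoint_iff_disjoint_support, ha, hb, ← Perm.disjoint_iff_disjoint_support]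
    exact hab
  rw [cycleType_eq (l.map (· ^ i)) h0' h1' h2', hct, List.map_map]
  exact congrArg _ (List.map_congr_left fun c hc => by simp [hsupp c hc])

/-- For a permutation `π` and `i : ℕ`, we have `orderOf π = orderOf (π ^ i)` if and only if
`π` and `π ^ i` have the same cycle type. -/
theorem orderOf_eq_iff_cycleType_eq {α : Type*} [Fintype α] [DecidableEq α]
    (π : Equiv.Perm α) (i : ℕ) :
    orderOf π = orderOf (π ^ i) ↔ π.cycleType = (π ^ i).cycleType := by
  constructor
  · intro h
    have hpos : 0 < orderOf π := orderOf_pos π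
    rw [orderOf_pow] at h
    have : Nat.gcd (orderOf π) i = 1 := by
      rcases (Nat.div_eq_self.mp h.symm) with h' | h'
      · omega
      · exact h'
    exact (cycleType_pow_coprime π ((Nat.coprime_comm).mp this)).symm
  · intro h
    rw [← lcm_cycleType, ← lcm_cycleType, h]
end

section
/- Let π and ρ be permutations of a finite type such that orderOf ρ divides orderOf π, and set d = orderOf π / orderOf ρ. Then there exists a natural number q such that π^q and ρ have the same cycle type if and only if π^d and ρ have the same cycle type. -/
theorem cycleType_pow_coprime_aux {α : Type*} [Fintype α] [DecidableEq α]
    (σ : Equiv.Perm α) : ∀ k : ℕ, Nat.Coprime k (orderOf σ) →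
    (σ ^ k).cycleType = σ.cycleType := by
  induction σ using Equiv.Perm.cycle_induction_on with
  | base_one => intro k _; simp
  | base_cycles σ hσ =>
    intro k hk
    have hc : (σ ^ k).IsCycle := hσ.pow_iff.mpr hk
    rw [hc.cycleType, hσ.cycleType]
    have hnd : ¬ orderOf σ ∣ k := by
      intro hdvd
      have h1 : orderOf σ = 1 :=
        Nat.eq_one_of_dvd_coprimes hk hdvd dvd_rfl
      exact hσ.ne_one (orderOf_eq_one_iff.mp h1)
    rw [hσ.support_pow_eq_iff.mpr hnd]
  | induction_disjoint σ τ hd hσ ihσ ihτ =>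
    intro k hk
    rw [hd.orderOf] at hk
    have hkσ : Nat.Coprime k (orderOf σ) :=
      Nat.Coprime.coprime_dvd_right (Nat.dvd_lcm_left _ _) hk
    have hkτ : Nat.Coprime k (orderOf τ) :=
      Nat.Coprime.coprime_dvd_right (Nat.dvd_lcm_right _ _) hk
    rw [hd.commute.mul_pow, Equiv.Perm.Disjoint.cycleType_mul (hd.pow_disjoint_pow k k), hd.cycleType_mul,
      ihσ k hkσ, ihτ k hkτ]

/-- If `orderOf ρ` divides `orderOf π` and `d = orderOf π / orderOf ρ`, then some power of `π`
has the same cycle type as `ρ` if and only if `π ^ d` has the same cycle type as `ρ`. -/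
theorem exists_pow_cycleType_iff {α : Type*} [Fintype α] [DecidableEq α]
    (π ρ : Equiv.Perm α) (h : orderOf ρ ∣ orderOf π) :
    (∃ q : ℕ, (π ^ q).cycleType = ρ.cycleType) ↔
      (π ^ (orderOf π / orderOf ρ)).cycleType = ρ.cycleType := by
  constructor
  · rintro ⟨q, hq⟩
    set n := orderOf π with hn
    have hnpos : 0 < n := orderOf_pos π
    have horder : orderOf (π ^ q) = orderOf ρ := by
      rw [← Equiv.Perm.lcm_cycleType, hq, Equiv.Perm.lcm_cycleType]
    rw [orderOf_pow, ← hn] at horder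
    set g := Nat.gcd n q with hg
    have hgdvdn : g ∣ n := Nat.gcd_dvd_left n q
    have hgdvdq : g ∣ q := Nat.gcd_dvd_right n q
    have hgpos : 0 < g := Nat.gcd_pos_of_pos_left q hnpos
    have hd : n / orderOf ρ = g := by
      rw [← horder, Nat.div_div_self hgdvdn hnpos.ne']
    rw [hd]
    have hpq : π ^ q = (π ^ g) ^ (q / g) := by
      rw [← pow_mul, Nat.mul_div_cancel' hgdvdq]
    have hog : orderOf (π ^ g) = n / g := by
      rw [orderOf_pow, ← hn, Nat.gcd_eq_right hgdvdn]
    have hcop : Nat.Coprime (q / g) (orderOf (π ^ g)) := by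
      rw [hog, hg, Nat.gcd_comm n q]
      exact Nat.coprime_div_gcd_div_gcd (Nat.gcd_pos_of_pos_right q hnpos)
    rw [← cycleType_pow_coprime_aux (π ^ g) (q / g) hcop, ← hpq, hq]
  · intro hq
    exact ⟨orderOf π / orderOf ρ, hq⟩
end

section
/- With the exact-3-hitting-set construction of ρ, π_1, π_2 as described, suppose x_1, x_2 are natural numbers such that π_1^{x_1} π_2^{x_2} has the same cycle type as ρ. Then for all i ∈ [n] and j ∈ [m]: x_1 ≢ 0 mod p_i, x_1 ≢ 0 mod p_{n+i}, and x_1 ≢ 0 mod q_j. -/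
/-! Exact-3-hitting-set construction.  The ground set is `Fin n`; the `j`-th clause is
`{idx j 0, idx j 1, idx j 2}` with `idx j` strictly monotone.  `p i` is the `(i+1)`-st prime
greater than `3` (zero-indexed, so `p 0 = 5`), `q n j` is the `(j+1)`-st of the `m` primes
following the first `2n` primes greater than `3`.  Every permutation group
`Sym(ℓ)`-component is realized on `Fin ℓ`, and the `ℓ`-cycle `([ℓ]) = (1,2,…,ℓ)` is realized
as `finRotate ℓ`.  Cycle types are computed in the symmetric group on the disjoint union of
all components (fixpoints are discarded by `Equiv.Perm.cycleType`, so the padding of the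
second block of components to degree `p_n^3 q_j` is immaterial). -/

namespace HittingSet

/-- `p i` is the `(i+1)`-st prime greater than 3 (zero-indexed): `p 0 = 5`. -/
noncomputable def p (i : ℕ) : ℕ := Nat.nth Nat.Prime (i + 2)

/-- `q n j` is the `(j+1)`-st prime following the first `2n` primes greater than 3. -/
noncomputable def q (n j : ℕ) : ℕ := Nat.nth Nat.Prime (2 * n + 2 + j)

/-- `r j = q_j ⬝ p_{i_1} p_{i_2} p_{i_3}` for the clause `C_j = {i_1 < i_2 < i_3}`. -/
noncomputable def r (n : ℕ) {m : ℕ} (idx : Fin m → Fin 3 → Fin n) (j : Fin m) : ℕ :=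
  q n j * (p (idx j 0) * p (idx j 1) * p (idx j 2))

/-- The underlying set of the permutation group
`G = ∏_{i=1}^n Sym(p_i p_{n+i}) × ∏_{j=1}^m Sym(r_j)^6` (embedded in a symmetric group). -/
abbrev Omega (n : ℕ) {m : ℕ} (idx : Fin m → Fin 3 → Fin n) : Type :=
  (Σ i : Fin n, Fin (p i * p (n + i))) ⊕ (Σ j : Fin m, Σ _d : Fin 6, Fin (r n idx j))

/-- `ρ = (ζ_1,…,ζ_n,η_1,…,η_m)` with `ζ_i = ([p_i p_{n+i}])` and
`η_j = (([r_j])^{p_{i_1}p_{i_2}p_{i_3}}, ([r_j])^{p_{i_1}}, ([r_j])^{p_{i_2}},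
([r_j])^{p_{i_3}}, ([r_j]), ([r_j]))`. -/
noncomputable def rho (n : ℕ) {m : ℕ} (idx : Fin m → Fin 3 → Fin n) : Equiv.Perm (Omega n idx) :=
  Equiv.sumCongr
    (Equiv.sigmaCongrRight fun _i => finRotate _)
    (Equiv.sigmaCongrRight fun j => Equiv.sigmaCongrRight fun d =>
      finRotate (r n idx j) ^
        (![p (idx j 0) * p (idx j 1) * p (idx j 2),
           p (idx j 0), p (idx j 1), p (idx j 2), 1, 1] d))

/-- `π_1 = (α_1,…,α_n,β_1,…,β_m)` with `α_i = ([p_i p_{n+i}])` and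
`β_j = (([r_j])^{s_{j,1}}, …, ([r_j])^{s_{j,6}})`. -/
noncomputable def pi1 (n : ℕ) {m : ℕ} (idx : Fin m → Fin 3 → Fin n) (s : Fin m → ℕ → ℕ) :
    Equiv.Perm (Omega n idx) :=
  Equiv.sumCongr
    (Equiv.sigmaCongrRight fun _i => finRotate _)
    (Equiv.sigmaCongrRight fun j => Equiv.sigmaCongrRight fun d =>
      finRotate (r n idx j) ^ s j d.val)

/-- `π_2 = (γ_1,…,γ_n,δ_1,…,δ_m)` with `γ_i = id` and
`δ_j = (([r_j])^{t_j}, …, ([r_j])^{t_j})`. -/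
noncomputable def pi2 (n : ℕ) {m : ℕ} (idx : Fin m → Fin 3 → Fin n) (t : Fin m → ℕ) :
    Equiv.Perm (Omega n idx) :=
  Equiv.sumCongr (Equiv.refl _)
    (Equiv.sigmaCongrRight fun j => Equiv.sigmaCongrRight fun _d =>
      finRotate (r n idx j) ^ t j)



section Aux
open Function Equiv

lemma perm_isPeriodicPt_iff {α : Type*} (σ : Equiv.Perm α) (k : ℕ) (x : α) :
    Function.IsPeriodicPt ⇑σ k x ↔ (σ ^ k) x = x := by
  rw [Function.IsPeriodicPt, Function.IsFixedPt, Equiv.Perm.coe_pow]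

lemma sumCongr_pow {α β : Type*} (e : Equiv.Perm α) (f : Equiv.Perm β) (k : ℕ) :
    (Equiv.sumCongr e f) ^ k = Equiv.sumCongr (e ^ k) (f ^ k) := by
  induction k with
  | zero => simp
  | succ k ih => rw [pow_succ, pow_succ, pow_succ, ih, Equiv.Perm.sumCongr_mul]

lemma sigmaCongrRight_pow {α : Type*} {β : α → Type*} (F : ∀ a, Equiv.Perm (β a)) (k : ℕ) :
    (Equiv.sigmaCongrRight F) ^ k = Equiv.sigmaCongrRight (fun a => F a ^ k) := by
  induction k with
  | zero => simp; rfl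
  | succ k ih =>
      rw [pow_succ, ih, Equiv.Perm.sigmaCongrRight_mul]
      congr 1
      funext a
      rw [Pi.mul_apply, pow_succ]

lemma minimalPeriod_sumCongr_inl {α β : Type*} (e : Equiv.Perm α) (f : Equiv.Perm β) (x : α) :
    minimalPeriod ⇑(Equiv.sumCongr e f) (Sum.inl x) = minimalPeriod ⇑e x := by
  rw [minimalPeriod_eq_minimalPeriod_iff]
  intro k
  rw [perm_isPeriodicPt_iff, perm_isPeriodicPt_iff, sumCongr_pow]
  simp

lemma minimalPeriod_sumCongr_inr {α β : Type*} (e : Equiv.Perm α) (f : Equiv.Perm β) (x : β) :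
    minimalPeriod ⇑(Equiv.sumCongr e f) (Sum.inr x) = minimalPeriod ⇑f x := by
  rw [minimalPeriod_eq_minimalPeriod_iff]
  intro k
  rw [perm_isPeriodicPt_iff, perm_isPeriodicPt_iff, sumCongr_pow]
  simp

lemma minimalPeriod_sigmaCongrRight {α : Type*} {β : α → Type*} (F : ∀ a, Equiv.Perm (β a))
    (i : α) (x : β i) :
    minimalPeriod ⇑(Equiv.sigmaCongrRight F) ⟨i, x⟩ = minimalPeriod ⇑(F i) x := by
  rw [minimalPeriod_eq_minimalPeriod_iff]
  intro k
  rw [perm_isPeriodicPt_iff, perm_isPeriodicPt_iff, sigmaCongrRight_pow]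
  simp

open Fin.NatCast in
lemma finRotate_pow_apply_eq_iff {ℓ : ℕ} (hℓ : 0 < ℓ) (k : ℕ) (x : Fin ℓ) :
    (finRotate ℓ ^ k) x = x ↔ ℓ ∣ k := by
  rcases ℓ with _ | ℓ
  · omega
  have h1 : ∀ (k : ℕ) (x : Fin (ℓ + 1)), (finRotate (ℓ + 1) ^ k) x = x + (k : Fin (ℓ + 1)) := by
    intro k
    induction k with
    | zero => intro x; simp
    | succ k ih =>
        intro x
        rw [pow_succ', Equiv.Perm.mul_apply, finRotate_succ_apply, ih, Nat.cast_succ]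
        rw [add_assoc]
  rw [h1, add_eq_left, Fin.natCast_eq_zero]

lemma isPeriodicPt_finRotate_pow {ℓ : ℕ} (hℓ : 0 < ℓ) (e k : ℕ) (x : Fin ℓ) :
    IsPeriodicPt ⇑(finRotate ℓ ^ e) k x ↔ ℓ ∣ e * k := by
  rw [perm_isPeriodicPt_iff, ← pow_mul, finRotate_pow_apply_eq_iff hℓ]

lemma minimalPeriod_finRotate_pow_dvd {ℓ : ℕ} (hℓ : 0 < ℓ) (e : ℕ) (x : Fin ℓ) :
    minimalPeriod ⇑(finRotate ℓ ^ e) x ∣ ℓ :=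
  IsPeriodicPt.minimalPeriod_dvd ((isPeriodicPt_finRotate_pow hℓ e ℓ x).mpr (dvd_mul_left ℓ e))

lemma minimalPeriod_finRotate {ℓ : ℕ} (hℓ : 0 < ℓ) (x : Fin ℓ) :
    minimalPeriod ⇑(finRotate ℓ) x = ℓ := by
  have key : ∀ k, IsPeriodicPt ⇑(finRotate ℓ) k x ↔ ℓ ∣ k := by
    intro k
    have h := isPeriodicPt_finRotate_pow hℓ 1 k x
    rwa [pow_one, one_mul] at h
  exact Nat.dvd_antisymm ((key ℓ).mpr dvd_rfl).minimalPeriod_dvd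
    ((key _).mp (isPeriodicPt_minimalPeriod _ _))

lemma minimalPeriod_finRotate_pow_ne {ℓ e P : ℕ} (hℓ : 0 < ℓ) (hP : 1 < P)
    (hPl : P ∣ ℓ) (hPe : P ∣ e) (x : Fin ℓ) :
    minimalPeriod ⇑(finRotate ℓ ^ e) x ≠ ℓ := by
  intro h
  have hPeq : P * (ℓ / P) = ℓ := Nat.mul_div_cancel' hPl
  obtain ⟨u, rfl⟩ := hPe
  have hper : IsPeriodicPt ⇑(finRotate ℓ ^ (P * u)) (ℓ / P) x := by
    rw [isPeriodicPt_finRotate_pow hℓ]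
    exact ⟨u, by rw [show P * u * (ℓ / P) = P * (ℓ / P) * u from by ring, hPeq]⟩
  have hdvd := hper.minimalPeriod_dvd
  rw [h] at hdvd
  have hlt : ℓ / P < ℓ := Nat.div_lt_self hℓ hP
  have hpos : 0 < ℓ / P := Nat.div_pos (Nat.le_of_dvd hℓ hPl) (by omega)
  exact absurd (Nat.le_of_dvd hpos hdvd) (by omega)

lemma minimalPeriod_eq_card_support_cycleOf {α : Type*} [Fintype α] [DecidableEq α]
    (f : Equiv.Perm α) (x : α) (hx : f x ≠ x) :
    minimalPeriod ⇑f x = (f.cycleOf x).support.card := by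
  have hc := Equiv.Perm.isCycle_cycleOf f hx
  have key : ∀ k, IsPeriodicPt ⇑f k x ↔ orderOf (f.cycleOf x) ∣ k := by
    intro k
    rw [perm_isPeriodicPt_iff, ← Equiv.Perm.cycleOf_pow_apply_self, orderOf_dvd_iff_pow_eq_one]
    constructor
    · intro h
      exact hc.pow_eq_one_iff.2 ⟨x, by rw [Equiv.Perm.cycleOf_apply_self]; exact hx, h⟩
    · intro h; rw [h]; rfl
  rw [← hc.orderOf]
  exact Nat.dvd_antisymm ((key _).mpr dvd_rfl).minimalPeriod_dvd
    ((key _).mp (isPeriodicPt_minimalPeriod _ _))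

lemma mem_cycleType_iff_exists {α : Type*} [Fintype α] [DecidableEq α] (σ : Equiv.Perm α)
    (L : ℕ) :
    L ∈ σ.cycleType ↔ ∃ x, σ x ≠ x ∧ minimalPeriod ⇑σ x = L := by
  rw [Equiv.Perm.cycleType_def, Multiset.mem_map]
  constructor
  · rintro ⟨c, hc, rfl⟩
    rw [Finset.mem_val] at hc
    obtain ⟨x, hx⟩ := (Equiv.Perm.mem_cycleFactorsFinset_iff.mp hc).1.nonempty_support
    have hcx : c = σ.cycleOf x := Equiv.Perm.cycle_is_cycleOf hx hc
    have hσx : σ x ≠ x := by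
      have h2 := (Equiv.Perm.mem_cycleFactorsFinset_iff.mp hc).2 x hx
      rw [← h2]
      exact Equiv.Perm.mem_support.mp hx
    exact ⟨x, hσx, by rw [minimalPeriod_eq_card_support_cycleOf σ x hσx, ← hcx]; rfl⟩
  · rintro ⟨x, hx, rfl⟩
    refine ⟨σ.cycleOf x, ?_, (minimalPeriod_eq_card_support_cycleOf σ x hx).symm⟩
    rw [Finset.mem_val]
    exact Equiv.Perm.cycleOf_mem_cycleFactorsFinset_iff.mpr (Equiv.Perm.mem_support.mpr hx)

lemma nth_prime_eq_of_dvd {a b : ℕ} (h : Nat.nth Nat.Prime a ∣ Nat.nth Nat.Prime b) : a = b :=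
  (Nat.nth_strictMono Nat.infinite_setOf_prime).injective
    ((Nat.prime_dvd_prime_iff_eq (Nat.prime_nth_prime a) (Nat.prime_nth_prime b)).mp h)

end Aux

/-- If `ct(π_1^{x_1} π_2^{x_2}) = ct(ρ)` then for all `i ∈ [n]` and `j ∈ [m]`:
`x_1 ≢ 0 (mod p_i)`, `x_1 ≢ 0 (mod p_{n+i})` and `x_1 ≢ 0 (mod q_j)`. -/
theorem x1_not_dvd
    (n m : ℕ) (idx : Fin m → Fin 3 → Fin n) (hidx : ∀ j, StrictMono (idx j))
    (s : Fin m → ℕ → ℕ) (t : Fin m → ℕ)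
    -- `s j d ∈ [0, r_j - 1]` for `d ∈ [6]` (here zero-indexed, `d ∈ {0,…,5}`)
    (hslt : ∀ j : Fin m, ∀ d : ℕ, d < 6 → s j d < r n idx j)
    -- `s_{j,d} ≡ 1 (mod q_j)` for all `d ∈ [6]`
    (hsq : ∀ j : Fin m, ∀ d : ℕ, d < 6 → s j d % q n j = 1)
    -- for `a ∈ [3]`: `s_{j,a} ≡ -1 (mod p_{i_a})` and `s_{j,a} ≡ 0 (mod p_{i_b})` for `b ≠ a`
    (hs1 : ∀ j : Fin m, ∀ a b : Fin 3,
      (s j a.val + if a = b then 1 else 0) % p (idx j b) = 0)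
    -- `(s_{j,4}, s_{j,5}, s_{j,6}) ≡ (-1,-3,-2) (mod p_{i_1})`, `(-2,-1,-3) (mod p_{i_2})`,
    -- `(-3,-2,-1) (mod p_{i_3})`
    (hs2 : ∀ j : Fin m, ∀ c b : Fin 3,
      (s j (3 + c.val) + (1 + (3 + b.val - c.val) % 3)) % p (idx j b) = 0)
    -- `t_j ∈ [0, r_j - 1]`, `t_j ≡ 1 (mod p_{i_a})` for `a ∈ [3]`, `t_j ≡ 0 (mod q_j)`
    (htlt : ∀ j : Fin m, t j < r n idx j)
    (htp : ∀ j : Fin m, ∀ a : Fin 3, t j % p (idx j a) = 1)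
    (htq : ∀ j : Fin m, t j % q n j = 0)
    (x1 x2 : ℕ)
    (hct : (pi1 n idx s ^ x1 * pi2 n idx t ^ x2).cycleType = (rho n idx).cycleType) :
    (∀ i : Fin n, ¬ p i.val ∣ x1 ∧ ¬ p (n + i.val) ∣ x1) ∧
      ∀ j : Fin m, ¬ q n j ∣ x1 := by
  classical
  have hpprime : ∀ a : ℕ, (p a).Prime := fun a => Nat.prime_nth_prime _
  have hqprime : ∀ j : Fin m, (q n j).Prime := fun j => Nat.prime_nth_prime _
  have hp2 : ∀ a : ℕ, 2 ≤ p a := fun a => (hpprime a).two_le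
  have hq2 : ∀ j : Fin m, 2 ≤ q n j := fun j => (hqprime j).two_le
  have hLpos : ∀ i : Fin n, 0 < p i.val * p (n + i.val) := fun i =>
    Nat.mul_pos (hpprime _).pos (hpprime _).pos
  have hrpos : ∀ j : Fin m, 0 < r n idx j :=
    fun j => Nat.mul_pos (hqprime j).pos
      (Nat.mul_pos (Nat.mul_pos (hpprime _).pos (hpprime _).pos) (hpprime _).pos)
  have hpp : ∀ a b : ℕ, p a ∣ p b → a = b := by
    intro a b h
    simp only [p] at h
    have := nth_prime_eq_of_dvd h
    omega
  have hqp : ∀ (j : Fin m) (b : ℕ), q n j ∣ p b → 2 * n + j.val = b := by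
    intro j b h
    simp only [p, q] at h
    have := nth_prime_eq_of_dvd h
    omega
  have hqq : ∀ (j j' : Fin m), q n j ∣ q n j' → j = j' := by
    intro j j' h
    simp only [q] at h
    have := nth_prime_eq_of_dvd h
    exact Fin.ext (by omega)
  -- normal form of the product permutation
  have hσ : pi1 n idx s ^ x1 * pi2 n idx t ^ x2 =
      Equiv.sumCongr
        (Equiv.sigmaCongrRight fun i : Fin n => finRotate (p i * p (n + i)) ^ x1)
        (Equiv.sigmaCongrRight fun j : Fin m => Equiv.sigmaCongrRight fun d : Fin 6 =>
          finRotate (r n idx j) ^ (s j d.val * x1 + t j * x2)) := by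
    rw [pi1, pi2, sumCongr_pow, sumCongr_pow, Equiv.Perm.sumCongr_mul]
    congr 1
    · rw [← Equiv.Perm.one_def, one_pow, mul_one, sigmaCongrRight_pow]
    · rw [sigmaCongrRight_pow, sigmaCongrRight_pow, Equiv.Perm.sigmaCongrRight_mul]
      congr 1
      funext j
      rw [Pi.mul_apply, sigmaCongrRight_pow, sigmaCongrRight_pow,
        Equiv.Perm.sigmaCongrRight_mul]
      congr 1
      funext d
      rw [Pi.mul_apply, ← pow_mul, ← pow_mul, ← pow_add]
  have mpσ_inl : ∀ (i' : Fin n) (a : Fin (p i' * p (n + i'))),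
      Function.minimalPeriod ⇑(pi1 n idx s ^ x1 * pi2 n idx t ^ x2) (Sum.inl ⟨i', a⟩)
        = Function.minimalPeriod ⇑(finRotate (p i' * p (n + i')) ^ x1) a := by
    intro i' a
    rw [hσ, minimalPeriod_sumCongr_inl, minimalPeriod_sigmaCongrRight]
  have mpσ_inr : ∀ (j : Fin m) (d : Fin 6) (a : Fin (r n idx j)),
      Function.minimalPeriod ⇑(pi1 n idx s ^ x1 * pi2 n idx t ^ x2) (Sum.inr ⟨j, d, a⟩)
        = Function.minimalPeriod ⇑(finRotate (r n idx j) ^ (s j d.val * x1 + t j * x2)) a := by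
    intro j d a
    rw [hσ, minimalPeriod_sumCongr_inr, minimalPeriod_sigmaCongrRight,
      minimalPeriod_sigmaCongrRight]
  have mpρ_inl : ∀ (i : Fin n) (a : Fin (p i * p (n + i))),
      Function.minimalPeriod ⇑(rho n idx) (Sum.inl ⟨i, a⟩) = p i * p (n + i) := by
    intro i a
    rw [rho, minimalPeriod_sumCongr_inl, minimalPeriod_sigmaCongrRight,
      minimalPeriod_finRotate (hLpos i)]
  have mpρ_inr : ∀ (j : Fin m) (a : Fin (r n idx j)),
      Function.minimalPeriod ⇑(rho n idx) (Sum.inr ⟨j, (4 : Fin 6), a⟩) = r n idx j := by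
    intro j a
    rw [rho, minimalPeriod_sumCongr_inr, minimalPeriod_sigmaCongrRight,
      minimalPeriod_sigmaCongrRight,
      show (![p (idx j 0) * p (idx j 1) * p (idx j 2),
        p (idx j 0), p (idx j 1), p (idx j 2), 1, 1] : Fin 6 → ℕ) (4 : Fin 6) = 1 from rfl,
      pow_one, minimalPeriod_finRotate (hrpos j)]
  have hmem1 : ∀ i : Fin n, (p i.val * p (n + i.val)) ∈ (rho n idx).cycleType := by
    intro i
    rw [mem_cycleType_iff_exists]
    refine ⟨Sum.inl ⟨i, ⟨0, hLpos i⟩⟩, ?_, mpρ_inl i _⟩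
    intro hfix
    have h1 := Function.minimalPeriod_eq_one_iff_isFixedPt.mpr hfix
    rw [mpρ_inl] at h1
    have h4 := Nat.mul_le_mul (hp2 i) (hp2 (n + i))
    omega
  have hmem2 : ∀ j : Fin m, r n idx j ∈ (rho n idx).cycleType := by
    intro j
    rw [mem_cycleType_iff_exists]
    refine ⟨Sum.inr ⟨j, (4 : Fin 6), ⟨0, hrpos j⟩⟩, ?_, mpρ_inr j _⟩
    intro hfix
    have h1 := Function.minimalPeriod_eq_one_iff_isFixedPt.mpr hfix
    rw [mpρ_inr] at h1
    have h4 : 2 ≤ r n idx j := by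
      rw [r]
      calc (2 : ℕ) = 2 * 1 := by norm_num
      _ ≤ q n j * (p (idx j 0) * p (idx j 1) * p (idx j 2)) :=
        Nat.mul_le_mul (hq2 j)
          (Nat.mul_pos (Nat.mul_pos (hpprime _).pos (hpprime _).pos) (hpprime _).pos)
    omega
  have main1 : ∀ i : Fin n, ∀ P : ℕ, P.Prime → P ∣ p i.val * p (n + i.val) → ¬ P ∣ x1 := by
    intro i P hP hPL hPx1
    have hL := hmem1 i
    rw [← hct, mem_cycleType_iff_exists] at hL
    obtain ⟨z, hzm, hz⟩ := hL
    rcases z with ⟨i', a⟩ | ⟨j', d, a⟩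
    · rw [mpσ_inl] at hz
      by_cases hii : i' = i
      · subst hii
        exact minimalPeriod_finRotate_pow_ne (hLpos i') hP.one_lt hPL hPx1 a hz
      · have hdvd := minimalPeriod_finRotate_pow_dvd (hLpos i') x1 a
        rw [hz] at hdvd
        have h2 : p (n + i.val) ∣ p i'.val * p (n + i'.val) :=
          dvd_trans (dvd_mul_left _ _) hdvd
        rcases (hpprime _).dvd_mul.mp h2 with h3 | h3
        · have h5 := hpp _ _ h3
          have h6 := i'.isLt
          omega
        · have h5 := hpp _ _ h3
          exact hii (Fin.ext (by omega))
    · rw [mpσ_inr] at hz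
      have hdvd := minimalPeriod_finRotate_pow_dvd (hrpos j') (s j' d.val * x1 + t j' * x2) a
      rw [hz] at hdvd
      have h2 : p (n + i.val) ∣ r n idx j' := dvd_trans (dvd_mul_left _ _) hdvd
      rw [r] at h2
      have hilt := i.isLt
      rcases (hpprime _).dvd_mul.mp h2 with h3 | h3
      · have h5 : (n + i.val) + 2 = 2 * n + 2 + j'.val := by
          simp only [p, q] at h3
          exact nth_prime_eq_of_dvd h3
        omega
      · rcases (hpprime _).dvd_mul.mp h3 with h4 | h4
        · rcases (hpprime _).dvd_mul.mp h4 with h5 | h5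
          · have h6 := hpp _ _ h5
            have h7 := (idx j' 0).isLt
            omega
          · have h6 := hpp _ _ h5
            have h7 := (idx j' 1).isLt
            omega
        · have h6 := hpp _ _ h4
          have h7 := (idx j' 2).isLt
          omega
  have main2 : ∀ j : Fin m, ¬ q n j ∣ x1 := by
    intro j hqx1
    have hL := hmem2 j
    rw [← hct, mem_cycleType_iff_exists] at hL
    obtain ⟨z, hzm, hz⟩ := hL
    rcases z with ⟨i', a⟩ | ⟨j', d, a⟩
    · rw [mpσ_inl] at hz
      have hdvd := minimalPeriod_finRotate_pow_dvd (hLpos i') x1 a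
      rw [hz] at hdvd
      have h2 : q n j ∣ p i'.val * p (n + i'.val) :=
        dvd_trans (by rw [r]; exact dvd_mul_right _ _) hdvd
      have h6 := i'.isLt
      rcases (hqprime j).dvd_mul.mp h2 with h3 | h3 <;>
        · have h5 := hqp _ _ h3
          omega
    · rw [mpσ_inr] at hz
      have hdvd := minimalPeriod_finRotate_pow_dvd (hrpos j') (s j' d.val * x1 + t j' * x2) a
      rw [hz] at hdvd
      have h2 : q n j ∣ r n idx j' :=
        dvd_trans (by rw [r]; exact dvd_mul_right _ _) hdvd
      have hjj : j = j' := by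
        rw [r] at h2
        rcases (hqprime j).dvd_mul.mp h2 with h3 | h3
        · exact hqq _ _ h3
        · exfalso
          rcases (hqprime j).dvd_mul.mp h3 with h4 | h4
          · rcases (hqprime j).dvd_mul.mp h4 with h5 | h5
            · have h6 := hqp _ _ h5
              have h7 := (idx j' 0).isLt
              omega
            · have h6 := hqp _ _ h5
              have h7 := (idx j' 1).isLt
              omega
          · have h6 := hqp _ _ h4
            have h7 := (idx j' 2).isLt
            omega
      rcases hjj with rfl
      refine minimalPeriod_finRotate_pow_ne (hrpos j) (hqprime j).one_lt ?_ ?_ a hz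
      · rw [r]; exact dvd_mul_right _ _
      · exact dvd_add (Dvd.dvd.mul_left hqx1 _)
          (Dvd.dvd.mul_right (Nat.dvd_of_mod_eq_zero (htq j)) _)
  exact ⟨fun i => ⟨main1 i (p i.val) (hpprime _) (dvd_mul_right _ _),
    main1 i (p (n + i.val)) (hpprime _) (dvd_mul_left _ _)⟩, main2⟩


end HittingSet
end

section
/- With the exact-3-hitting-set construction of ρ, π_1, π_2 as described, suppose x_1, x_2 are natural numbers such that π_1^{x_1} π_2^{x_2} has the same cycle type as ρ. Then for every clause C_j = {i_1 < i_2 < i_3} there is a unique a ∈ [3] such that x_2 ≢ 0 mod p_{i_a} and x_2 ≡ 0 mod p_{i_b} for all b ∈ [3] ∖ {a}. -/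
/-! Exact-3-hitting-set construction.  The ground set is `Fin n`; the `j`-th clause is
`{idx j 0, idx j 1, idx j 2}` with `idx j` strictly monotone.  `p i` is the `(i+1)`-st prime
greater than `3` (zero-indexed, so `p 0 = 5`), `q n j` is the `(j+1)`-st of the `m` primes
following the first `2n` primes greater than `3`.  Every permutation group
`Sym(ℓ)`-component is realized on `Fin ℓ`, and the `ℓ`-cycle `([ℓ]) = (1,2,…,ℓ)` is realized
as `finRotate ℓ`.  Cycle types are computed in the symmetric group on the disjoint union of
all components (fixpoints are discarded by `Equiv.Perm.cycleType`, so the padding of the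
second block of components to degree `p_n^3 q_j` is immaterial). -/

namespace HittingSet

/-! ### Auxiliary lemmas -/

lemma p_prime (i : ℕ) : (p i).Prime := Nat.prime_nth_prime _

lemma q_prime (n j : ℕ) : (q n j).Prime := Nat.prime_nth_prime _

lemma p_gt3 (i : ℕ) : 3 < p i := by
  have := Nat.add_two_le_nth_prime (i + 2)
  unfold p; omega

lemma p_pos (i : ℕ) : 0 < p i := by have := p_gt3 i; omega

lemma nth_ne {a b : ℕ} (h : a ≠ b) : Nat.nth Nat.Prime a ≠ Nat.nth Nat.Prime b := by
  intro hc
  exact h ((Nat.nth_strictMono Nat.infinite_setOf_prime).injective hc)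

open Fin.NatCast in
lemma finRotate_pow_apply (k E : ℕ) (v : Fin (k + 1)) :
    (finRotate (k + 1) ^ E) v = v + (E : Fin (k + 1)) := by
  induction E with
  | zero => simp
  | succ e ih =>
    rw [pow_succ', Equiv.Perm.mul_apply, ih, finRotate_succ_apply, Nat.cast_add, Nat.cast_one]
    abel

open Fin.NatCast in
lemma finRotate_pow_fixed_iff (k E : ℕ) (v : Fin (k + 1)) :
    (finRotate (k + 1) ^ E) v = v ↔ (k + 1) ∣ E := by
  rw [finRotate_pow_apply, add_eq_left, Fin.natCast_eq_zero]

lemma sum_fix (ℓ E : ℕ) :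
    (∑ v : Fin ℓ, if (finRotate ℓ ^ E) v = v then 1 else 0) = if ℓ ∣ E then ℓ else 0 := by
  cases ℓ with
  | zero => simp
  | succ k =>
    simp only [finRotate_pow_fixed_iff]
    by_cases h : (k + 1) ∣ E <;> simp [h]

lemma fixcount_conj {α : Type*} [Fintype α] [DecidableEq α] {σ τ : Equiv.Perm α}
    (h : IsConj σ τ) :
    (∑ x, if σ x = x then 1 else 0) = ∑ x, if τ x = x then 1 else 0 := by
  obtain ⟨c, hc⟩ := isConj_iff.1 h
  refine Fintype.sum_equiv (c : Equiv.Perm α) _ _ fun x => ?_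
  have hτ : τ (c x) = c (σ x) := by
    rw [← hc]; simp [Equiv.Perm.mul_apply]
  rw [hτ]
  by_cases hx : σ x = x
  · simp [hx]
  · have : ¬ c (σ x) = c x := fun hcc => hx (c.injective hcc)
    simp [hx, this]

lemma isConj_pow {G : Type*} [Group G] {a b : G} (h : IsConj a b) (k : ℕ) :
    IsConj (a ^ k) (b ^ k) := by
  obtain ⟨c, hc⟩ := isConj_iff.1 h
  refine isConj_iff.2 ⟨c, ?_⟩
  rw [← hc, conj_pow]

/-! ### The componentwise rotation combinator `W` -/

noncomputable def W (n : ℕ) {m : ℕ} (idx : Fin m → Fin 3 → Fin n)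
    (f : Fin n → ℕ) (g : Fin m → Fin 6 → ℕ) : Equiv.Perm (Omega n idx) :=
  Equiv.sumCongr
    (Equiv.sigmaCongrRight fun i => finRotate _ ^ f i)
    (Equiv.sigmaCongrRight fun j => Equiv.sigmaCongrRight fun d =>
      finRotate (r n idx j) ^ g j d)

lemma W_apply_inl (n : ℕ) {m : ℕ} (idx : Fin m → Fin 3 → Fin n) (f g) (i : Fin n)
    (v : Fin (p i * p (n + i))) :
    W n idx f g (Sum.inl ⟨i, v⟩) = Sum.inl ⟨i, (finRotate _ ^ f i) v⟩ := rfl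

lemma W_apply_inr (n : ℕ) {m : ℕ} (idx : Fin m → Fin 3 → Fin n) (f g) (j : Fin m)
    (d : Fin 6) (v : Fin (r n idx j)) :
    W n idx f g (Sum.inr ⟨j, d, v⟩) = Sum.inr ⟨j, d, (finRotate _ ^ g j d) v⟩ := rfl

lemma W_mul (n : ℕ) {m : ℕ} (idx : Fin m → Fin 3 → Fin n) (f f' g g') :
    W n idx f g * W n idx f' g' = W n idx (fun i => f i + f' i) (fun j d => g j d + g' j d) := by
  apply Equiv.ext
  rintro (⟨i, v⟩ | ⟨j, d, v⟩) <;>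
    simp only [Equiv.Perm.mul_apply, W_apply_inl, W_apply_inr, pow_add]

lemma W_pow (n : ℕ) {m : ℕ} (idx : Fin m → Fin 3 → Fin n) (f g) (k : ℕ) :
    (W n idx f g) ^ k = W n idx (fun i => f i * k) (fun j d => g j d * k) := by
  induction k with
  | zero =>
    apply Equiv.ext
    rintro (⟨i, v⟩ | ⟨j, d, v⟩) <;> simp [W]
  | succ e ih =>
    rw [pow_succ, ih, W_mul]
    congr 1 <;> funext <;> ring

lemma F_W (n : ℕ) {m : ℕ} (idx : Fin m → Fin 3 → Fin n) (f : Fin n → ℕ)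
    (g : Fin m → Fin 6 → ℕ) :
    (∑ x : Omega n idx, if W n idx f g x = x then 1 else 0)
      = (∑ i : Fin n, if p i.val * p (n + i.val) ∣ f i then p i.val * p (n + i.val) else 0)
        + ∑ j : Fin m, ∑ d : Fin 6, if r n idx j ∣ g j d then r n idx j else 0 := by
  rw [Fintype.sum_sum_type]
  congr 1
  · rw [← Finset.univ_sigma_univ, Finset.sum_sigma]
    refine Finset.sum_congr rfl fun i _ => ?_
    rw [← sum_fix (p i.val * p (n + i.val)) (f i)]
    refine Finset.sum_congr rfl fun v _ => if_congr ?_ rfl rfl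
    rw [W_apply_inl]
    simp
  · rw [← Finset.univ_sigma_univ, Finset.sum_sigma]
    refine Finset.sum_congr rfl fun j _ => ?_
    rw [← Finset.univ_sigma_univ, Finset.sum_sigma]
    refine Finset.sum_congr rfl fun d _ => ?_
    rw [← sum_fix (r n idx j) (g j d)]
    refine Finset.sum_congr rfl fun v _ => if_congr ?_ rfl rfl
    rw [W_apply_inr]
    simp

lemma pi1_eq (n : ℕ) {m : ℕ} (idx : Fin m → Fin 3 → Fin n) (s : Fin m → ℕ → ℕ) :
    pi1 n idx s = W n idx (fun _ => 1) (fun j d => s j d.val) := by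
  apply Equiv.ext
  rintro (⟨i, v⟩ | ⟨j, d, v⟩) <;> simp [pi1, W, pow_one]

lemma pi2_eq (n : ℕ) {m : ℕ} (idx : Fin m → Fin 3 → Fin n) (t : Fin m → ℕ) :
    pi2 n idx t = W n idx (fun _ => 0) (fun j _ => t j) := by
  apply Equiv.ext
  rintro (⟨i, v⟩ | ⟨j, d, v⟩) <;> simp [pi2, W, pow_zero]

lemma rho_eq (n : ℕ) {m : ℕ} (idx : Fin m → Fin 3 → Fin n) :
    rho n idx = W n idx (fun _ => 1)
      (fun j d => ![p (idx j 0) * p (idx j 1) * p (idx j 2),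
        p (idx j 0), p (idx j 1), p (idx j 2), 1, 1] d) := by
  apply Equiv.ext
  rintro (⟨i, v⟩ | ⟨j, d, v⟩) <;> simp [rho, W, pow_one]

lemma W_congr (n : ℕ) {m : ℕ} (idx : Fin m → Fin 3 → Fin n) {f f' : Fin n → ℕ}
    {g g' : Fin m → Fin 6 → ℕ} (h1 : ∀ i, f i = f' i) (h2 : ∀ j d, g j d = g' j d) :
    W n idx f g = W n idx f' g' := by
  apply Equiv.ext
  rintro (⟨i, v⟩ | ⟨j, d, v⟩)
  · rw [W_apply_inl, W_apply_inl, h1]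
  · rw [W_apply_inr, W_apply_inr, h2]

lemma key_pow (n : ℕ) {m : ℕ} (idx : Fin m → Fin 3 → Fin n) (s : Fin m → ℕ → ℕ)
    (t : Fin m → ℕ) (x1 x2 k : ℕ) :
    (pi1 n idx s ^ x1 * pi2 n idx t ^ x2) ^ k
      = W n idx (fun _ => x1 * k) (fun j d => (s j d.val * x1 + t j * x2) * k) := by
  rw [pi1_eq, pi2_eq, W_pow, W_pow, W_mul, W_pow]
  exact W_congr n idx (fun i => by ring) (fun j d => by ring)

lemma rho_pow (n : ℕ) {m : ℕ} (idx : Fin m → Fin 3 → Fin n) (k : ℕ) :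
    (rho n idx) ^ k = W n idx (fun _ => 1 * k)
      (fun j d => (![p (idx j 0) * p (idx j 1) * p (idx j 2),
        p (idx j 0), p (idx j 1), p (idx j 2), 1, 1] d) * k) := by
  rw [rho_eq, W_pow]

/-! ### Arithmetic extraction machinery -/

lemma step_sigma {R Q P3 : ℕ} (hRdef : R = Q * P3) (hQpos : 0 < Q)
    (copQP3 : Nat.Coprime Q P3) {k : ℕ} (hk : Nat.Coprime Q k) (e : ℕ) :
    (if R ∣ e * (Q * k) then R else 0)
      = (if R ∣ e * k then R else 0) + if P3 ∣ e * k ∧ ¬ Q ∣ e then R else 0 := by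
  have h1 : (R ∣ e * (Q * k)) ↔ P3 ∣ e * k := by
    rw [hRdef, show e * (Q * k) = Q * (e * k) from by ring]
    exact Nat.mul_dvd_mul_iff_left hQpos
  have h2 : (R ∣ e * k) ↔ (P3 ∣ e * k ∧ Q ∣ e) := by
    rw [hRdef]
    constructor
    · intro h
      exact ⟨(dvd_mul_left P3 Q).trans h, (hk.dvd_mul_right).1 ((dvd_mul_right Q P3).trans h)⟩
    · rintro ⟨hP, hQe⟩
      exact Nat.Coprime.mul_dvd_of_dvd_of_dvd copQP3 (hQe.mul_right k) hP
  by_cases hP : P3 ∣ e * k <;> by_cases hQe : Q ∣ e <;> simp [h1, h2, hP, hQe]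

lemma sum_ite_const {R : ℕ} (c : Fin 6 → Prop) [DecidablePred c] :
    (∑ d : Fin 6, if c d then R else 0) = R * ∑ d : Fin 6, if c d then 1 else 0 := by
  rw [Finset.mul_sum]
  exact Finset.sum_congr rfl fun d _ => by split_ifs <;> simp

lemma extraction {Q P3 R : ℕ} (hRdef : R = Q * P3) (hQpos : 0 < Q) (hP3pos : 0 < P3)
    (copQP3 : Nat.Coprime Q P3)
    {ι : Type*} [Fintype ι] [DecidableEq ι] (j : ι)
    (Rf : ι → ℕ) (hRj : Rf j = R)
    (Ef Uf : ι → Fin 6 → ℕ)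
    (copRQ : ∀ i : ι, i ≠ j → Nat.Coprime (Rf i) Q)
    (hU : ∀ d : Fin 6, ¬ Q ∣ Uf j d)
    (A A' : ℕ → ℕ)
    (hA : ∀ k, A (Q * k) = A k) (hA' : ∀ k, A' (Q * k) = A' k)
    (master : ∀ k, A k + (∑ i : ι, ∑ d : Fin 6, if Rf i ∣ Ef i d * k then Rf i else 0)
       = A' k + (∑ i : ι, ∑ d : Fin 6, if Rf i ∣ Uf i d * k then Rf i else 0))
    (k : ℕ) (hk : Nat.Coprime Q k) :
    (∑ d : Fin 6, if P3 ∣ Ef j d * k ∧ ¬ Q ∣ Ef j d then 1 else 0)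
      = ∑ d : Fin 6, if P3 ∣ Uf j d * k then 1 else 0 := by
  have M1 := master k
  have M2 := master (Q * k)
  rw [hA, hA'] at M2
  have split : ∀ (G : ι → ℕ), (∑ i, G i) = (∑ i ∈ Finset.univ.erase j, G i) + G j :=
    fun G => (Finset.sum_erase_add _ _ (Finset.mem_univ j)).symm
  rw [split fun i => ∑ d : Fin 6, if Rf i ∣ Ef i d * (Q * k) then Rf i else 0,
      split fun i => ∑ d : Fin 6, if Rf i ∣ Uf i d * (Q * k) then Rf i else 0] at M2
  rw [split fun i => ∑ d : Fin 6, if Rf i ∣ Ef i d * k then Rf i else 0,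
      split fun i => ∑ d : Fin 6, if Rf i ∣ Uf i d * k then Rf i else 0] at M1
  have e1 : (∑ i ∈ Finset.univ.erase j, ∑ d : Fin 6, if Rf i ∣ Ef i d * (Q * k) then Rf i else 0)
      = ∑ i ∈ Finset.univ.erase j, ∑ d : Fin 6, if Rf i ∣ Ef i d * k then Rf i else 0 :=
    Finset.sum_congr rfl fun i hi => Finset.sum_congr rfl fun d _ => if_congr
      (by rw [show Ef i d * (Q * k) = Ef i d * k * Q from by ring]
          exact (copRQ i (Finset.ne_of_mem_erase hi)).dvd_mul_right) rfl rfl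
  have e2 : (∑ i ∈ Finset.univ.erase j, ∑ d : Fin 6, if Rf i ∣ Uf i d * (Q * k) then Rf i else 0)
      = ∑ i ∈ Finset.univ.erase j, ∑ d : Fin 6, if Rf i ∣ Uf i d * k then Rf i else 0 :=
    Finset.sum_congr rfl fun i hi => Finset.sum_congr rfl fun d _ => if_congr
      (by rw [show Uf i d * (Q * k) = Uf i d * k * Q from by ring]
          exact (copRQ i (Finset.ne_of_mem_erase hi)).dvd_mul_right) rfl rfl
  rw [e1, e2] at M2
  have j1 : (∑ d : Fin 6, if Rf j ∣ Ef j d * (Q * k) then Rf j else 0)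
      = (∑ d : Fin 6, if Rf j ∣ Ef j d * k then Rf j else 0)
        + ∑ d : Fin 6, if P3 ∣ Ef j d * k ∧ ¬ Q ∣ Ef j d then R else 0 := by
    rw [← Finset.sum_add_distrib]
    refine Finset.sum_congr rfl fun d _ => ?_
    rw [hRj]
    exact step_sigma hRdef hQpos copQP3 hk (Ef j d)
  have j2 : (∑ d : Fin 6, if Rf j ∣ Uf j d * (Q * k) then Rf j else 0)
      = (∑ d : Fin 6, if Rf j ∣ Uf j d * k then Rf j else 0)
        + ∑ d : Fin 6, if P3 ∣ Uf j d * k then R else 0 := by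
    rw [← Finset.sum_add_distrib]
    refine Finset.sum_congr rfl fun d _ => ?_
    rw [hRj, step_sigma hRdef hQpos copQP3 hk (Uf j d)]
    congr 1
    exact if_congr (and_iff_left (hU d)) rfl rfl
  rw [j1, j2] at M2
  have key : (∑ d : Fin 6, if P3 ∣ Ef j d * k ∧ ¬ Q ∣ Ef j d then R else 0)
      = ∑ d : Fin 6, if P3 ∣ Uf j d * k then R else 0 := by omega
  rw [sum_ite_const (R := R), sum_ite_const (R := R)] at key
  exact Nat.eq_of_mul_eq_mul_left (hRdef ▸ Nat.mul_pos hQpos hP3pos) key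

lemma sum6_all {c : Fin 6 → Prop} [DecidablePred c]
    (h : (∑ d : Fin 6, if c d then 1 else 0) = 6) : ∀ d, c d := by
  intro d
  by_contra hd
  have hsplit : (∑ d' ∈ Finset.univ.erase d, if c d' then 1 else 0) + (if c d then 1 else 0)
      = ∑ d' : Fin 6, if c d' then 1 else 0 :=
    Finset.sum_erase_add _ _ (Finset.mem_univ d)
  have hb : (∑ d' ∈ Finset.univ.erase d, if c d' then 1 else 0)
      ≤ (Finset.univ.erase d).card * 1 :=
    Finset.sum_le_card_nsmul _ _ 1 fun x _ => by split_ifs <;> omega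
  have hcard : (Finset.univ.erase d).card = 5 := by
    rw [Finset.card_erase_of_mem (Finset.mem_univ d)]
    simp
  rw [hcard] at hb
  rw [if_neg hd] at hsplit
  omega

lemma sum6_exists {c : Fin 6 → Prop} [DecidablePred c]
    (h : (∑ d : Fin 6, if c d then 1 else 0) = 1) : ∃ d, c d := by
  by_contra h'
  push_neg at h'
  simp [h'] at h

lemma zcast_of_mod {P a c : ℕ} (h : (a + c) % P = 0) : (a : ZMod P) = -(c : ℕ) := by
  have h0 : ((a + c : ℕ) : ZMod P) = 0 :=
    (ZMod.natCast_eq_zero_iff _ _).2 (Nat.dvd_of_mod_eq_zero h)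
  push_cast at h0
  linear_combination h0

lemma dichotomy {P : ℕ} (hP : P.Prime) (h3 : 3 < P) (X1 X2 : ZMod P)
    (h : (if X2 = 0 then 1 else 0) + (if X2 = 0 then 1 else 0) + (if X2 = X1 then 1 else 0)
       + (if X2 = X1 then 1 else 0) + (if X2 = 2 * X1 then 1 else 0)
       + (if X2 = 3 * X1 then 1 else 0) = 2) :
    X1 ≠ 0 ∧ (X2 = 0 ∨ X2 = X1) := by
  constructor
  · intro h0
    rw [h0] at h
    simp only [mul_zero] at h
    split_ifs at h <;> omega
  · by_contra hc
    push_neg at hc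
    rw [if_neg hc.1, if_neg hc.2] at h
    simp only [zero_add] at h
    split_ifs at h with h1 h2
    · have hx1 : X1 = 0 := by linear_combination h1 - h2
      exact hc.1 (by rw [h1, hx1, mul_zero])
    all_goals omega

lemma two_ne_zero_zmod {P : ℕ} (h3 : 3 < P) : (2 : ZMod P) ≠ 0 := by
  intro h
  have h2 : ((2 : ℕ) : ZMod P) = 0 := by exact_mod_cast h
  rw [ZMod.natCast_eq_zero_iff] at h2
  have := Nat.le_of_dvd (by norm_num) h2
  omega

/-- If `ct(π_1^{x_1} π_2^{x_2}) = ct(ρ)` then for every clause `C_j = {i_1 < i_2 < i_3}` there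
is a unique `a ∈ [3]` with `x_2 ≢ 0 (mod p_{i_a})` and `x_2 ≡ 0 (mod p_{i_b})` for all
`b ∈ [3] ∖ {a}`. -/
theorem exists_unique_not_dvd_x2
    (n m : ℕ) (idx : Fin m → Fin 3 → Fin n) (hidx : ∀ j, StrictMono (idx j))
    (s : Fin m → ℕ → ℕ) (t : Fin m → ℕ)
    -- `s j d ∈ [0, r_j - 1]` for `d ∈ [6]` (here zero-indexed, `d ∈ {0,…,5}`)
    (hslt : ∀ j : Fin m, ∀ d : ℕ, d < 6 → s j d < r n idx j)
    -- `s_{j,d} ≡ 1 (mod q_j)` for all `d ∈ [6]`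
    (hsq : ∀ j : Fin m, ∀ d : ℕ, d < 6 → s j d % q n j = 1)
    -- for `a ∈ [3]`: `s_{j,a} ≡ -1 (mod p_{i_a})` and `s_{j,a} ≡ 0 (mod p_{i_b})` for `b ≠ a`
    (hs1 : ∀ j : Fin m, ∀ a b : Fin 3,
      (s j a.val + if a = b then 1 else 0) % p (idx j b) = 0)
    -- `(s_{j,4}, s_{j,5}, s_{j,6}) ≡ (-1,-3,-2) (mod p_{i_1})`, `(-2,-1,-3) (mod p_{i_2})`,
    -- `(-3,-2,-1) (mod p_{i_3})`
    (hs2 : ∀ j : Fin m, ∀ c b : Fin 3,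
      (s j (3 + c.val) + (1 + (3 + b.val - c.val) % 3)) % p (idx j b) = 0)
    -- `t_j ∈ [0, r_j - 1]`, `t_j ≡ 1 (mod p_{i_a})` for `a ∈ [3]`, `t_j ≡ 0 (mod q_j)`
    (htlt : ∀ j : Fin m, t j < r n idx j)
    (htp : ∀ j : Fin m, ∀ a : Fin 3, t j % p (idx j a) = 1)
    (htq : ∀ j : Fin m, t j % q n j = 0)
    (x1 x2 : ℕ)
    (hct : (pi1 n idx s ^ x1 * pi2 n idx t ^ x2).cycleType = (rho n idx).cycleType) :
    ∀ j : Fin m, ∃! a : Fin 3,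
      ¬ p (idx j a) ∣ x2 ∧ ∀ b : Fin 3, b ≠ a → p (idx j b) ∣ x2 := by
  classical
  have hconj : IsConj (pi1 n idx s ^ x1 * pi2 n idx t ^ x2) (rho n idx) :=
    Equiv.Perm.isConj_iff_cycleType_eq.2 hct
  have master : ∀ k : ℕ,
      ((∑ i : Fin n, if p i.val * p (n + i.val) ∣ x1 * k then p i.val * p (n + i.val) else 0)
        + ∑ j' : Fin m, ∑ d : Fin 6,
            if r n idx j' ∣ (s j' d.val * x1 + t j' * x2) * k then r n idx j' else 0)
      = ((∑ i : Fin n, if p i.val * p (n + i.val) ∣ k then p i.val * p (n + i.val) else 0)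
        + ∑ j' : Fin m, ∑ d : Fin 6,
            if r n idx j' ∣ (![p (idx j' 0) * p (idx j' 1) * p (idx j' 2),
                p (idx j' 0), p (idx j' 1), p (idx j' 2), 1, 1] d) * k
            then r n idx j' else 0) := by
    intro k
    have h0 := fixcount_conj (isConj_pow hconj k)
    rw [key_pow n idx s t x1 x2 k, rho_pow n idx k, F_W, F_W] at h0
    simpa only [one_mul] using h0
  intro j
  have hQp : (q n j).Prime := q_prime n j
  have hQpos : 0 < q n j := hQp.pos
  have copQPa : ∀ a : Fin 3, Nat.Coprime (q n j) (p (idx j a)) := by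
    intro a
    refine (Nat.coprime_primes hQp (p_prime _)).2 (nth_ne ?_)
    have := (idx j a).isLt
    omega
  have copQP3 : Nat.Coprime (q n j) (p (idx j 0) * p (idx j 1) * p (idx j 2)) :=
    Nat.Coprime.mul_right (Nat.Coprime.mul_right (copQPa 0) (copQPa 1)) (copQPa 2)
  have copNQ : ∀ i : Fin n, Nat.Coprime (p i.val * p (n + i.val)) (q n j) := by
    intro i
    have hi := i.isLt
    exact Nat.Coprime.mul
      ((Nat.coprime_primes (p_prime _) hQp).2 (nth_ne (by omega)))
      ((Nat.coprime_primes (p_prime _) hQp).2 (nth_ne (by omega)))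
  have copRQ : ∀ j' : Fin m, j' ≠ j → Nat.Coprime (r n idx j') (q n j) := by
    intro j' hne
    have hvne : j'.val ≠ j.val := fun hv => hne (Fin.ext hv)
    have hq' : Nat.Coprime (q n j') (q n j) :=
      (Nat.coprime_primes (q_prime n j') hQp).2 (nth_ne (by omega))
    have hp' : ∀ a : Fin 3, Nat.Coprime (p (idx j' a)) (q n j) := by
      intro a
      have := (idx j' a).isLt
      exact (Nat.coprime_primes (p_prime _) hQp).2 (nth_ne (by omega))
    exact Nat.Coprime.mul hq' (Nat.Coprime.mul (Nat.Coprime.mul (hp' 0) (hp' 1)) (hp' 2))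
  have hP3pos : 0 < p (idx j 0) * p (idx j 1) * p (idx j 2) :=
    Nat.mul_pos (Nat.mul_pos (p_pos _) (p_pos _)) (p_pos _)
  have hUdvd : ∀ d : Fin 6,
      (![p (idx j 0) * p (idx j 1) * p (idx j 2), p (idx j 0), p (idx j 1), p (idx j 2), 1, 1] d)
        ∣ p (idx j 0) * p (idx j 1) * p (idx j 2) := by
    intro d
    fin_cases d
    · exact dvd_rfl
    · show p (idx j 0) ∣ p (idx j 0) * p (idx j 1) * p (idx j 2)
      exact ⟨p (idx j 1) * p (idx j 2), by ring⟩
    · show p (idx j 1) ∣ p (idx j 0) * p (idx j 1) * p (idx j 2)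
      exact ⟨p (idx j 0) * p (idx j 2), by ring⟩
    · show p (idx j 2) ∣ p (idx j 0) * p (idx j 1) * p (idx j 2)
      exact ⟨p (idx j 0) * p (idx j 1), by ring⟩
    · exact one_dvd _
    · exact one_dvd _
  have hU : ∀ d : Fin 6, ¬ q n j ∣
      (![p (idx j 0) * p (idx j 1) * p (idx j 2), p (idx j 0), p (idx j 1), p (idx j 2), 1, 1] d) := by
    intro d hq
    have h1 : q n j ∣ Nat.gcd (q n j) (p (idx j 0) * p (idx j 1) * p (idx j 2)) :=
      Nat.dvd_gcd dvd_rfl (hq.trans (hUdvd d))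
    rw [Nat.Coprime.gcd_eq_one copQP3] at h1
    have := Nat.le_of_dvd one_pos h1
    have := hQp.two_le
    omega
  have EXT : ∀ k : ℕ, Nat.Coprime (q n j) k →
      (∑ d : Fin 6, if p (idx j 0) * p (idx j 1) * p (idx j 2) ∣ (s j d.val * x1 + t j * x2) * k
          ∧ ¬ q n j ∣ (s j d.val * x1 + t j * x2) then 1 else 0)
        = ∑ d : Fin 6, if p (idx j 0) * p (idx j 1) * p (idx j 2) ∣
            (![p (idx j 0) * p (idx j 1) * p (idx j 2),
              p (idx j 0), p (idx j 1), p (idx j 2), 1, 1] d) * k then 1 else 0 := by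
    intro k hk
    exact extraction rfl hQpos hP3pos copQP3 j (r n idx) rfl
      (fun j' d => s j' d.val * x1 + t j' * x2)
      (fun j' d => ![p (idx j' 0) * p (idx j' 1) * p (idx j' 2),
          p (idx j' 0), p (idx j' 1), p (idx j' 2), 1, 1] d)
      copRQ hU
      (fun k' => ∑ i : Fin n, if p i.val * p (n + i.val) ∣ x1 * k' then p i.val * p (n + i.val) else 0)
      (fun k' => ∑ i : Fin n, if p i.val * p (n + i.val) ∣ k' then p i.val * p (n + i.val) else 0)
      (fun k' => Finset.sum_congr rfl fun i _ => if_congr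
        (by rw [show x1 * (q n j * k') = x1 * k' * q n j from by ring]
            exact (copNQ i).dvd_mul_right) rfl rfl)
      (fun k' => Finset.sum_congr rfl fun i _ => if_congr
        (by rw [mul_comm (q n j) k']
            exact (copNQ i).dvd_mul_right) rfl rfl)
      master k hk
  -- F0 : no exponent is divisible by q
  have F0 : ∀ d : Fin 6, ¬ q n j ∣ (s j d.val * x1 + t j * x2) := by
    have h := EXT (p (idx j 0) * p (idx j 1) * p (idx j 2)) copQP3
    have hL : (∑ d : Fin 6, if ¬ q n j ∣ (s j d.val * x1 + t j * x2) then 1 else 0)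
        = ∑ d : Fin 6, if p (idx j 0) * p (idx j 1) * p (idx j 2) ∣
            (s j d.val * x1 + t j * x2) * (p (idx j 0) * p (idx j 1) * p (idx j 2))
            ∧ ¬ q n j ∣ (s j d.val * x1 + t j * x2) then 1 else 0 :=
      Finset.sum_congr rfl fun d _ => ((if_congr (and_iff_right (dvd_mul_left _ _)) rfl rfl)).symm
    have hR : (∑ d : Fin 6, if p (idx j 0) * p (idx j 1) * p (idx j 2) ∣
          (![p (idx j 0) * p (idx j 1) * p (idx j 2),
            p (idx j 0), p (idx j 1), p (idx j 2), 1, 1] d)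
          * (p (idx j 0) * p (idx j 1) * p (idx j 2)) then 1 else 0) = 6 := by
      refine Eq.trans (Finset.sum_congr rfl fun d _ => if_pos (dvd_mul_left _ _)) ?_
      simp
    exact sum6_all (hL.trans (h.trans hR))
  -- non-divisibility of distinct primes
  have pnd : ∀ a b : Fin 3, a ≠ b → ¬ p (idx j a) ∣ p (idx j b) := by
    intro a b hab hdvd
    have hi : idx j a ≠ idx j b := fun h => hab ((hidx j).injective h)
    have hv : (idx j a).val ≠ (idx j b).val := fun h => hi (Fin.ext h)
    have hne : p (idx j a) ≠ p (idx j b) := nth_ne (by omega)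
    exact hne ((Nat.prime_dvd_prime_iff_eq (p_prime _) (p_prime _)).1 hdvd)
  have pnd1 : ∀ a : Fin 3, ¬ p (idx j a) ∣ 1 := by
    intro a h
    have h1 := Nat.le_of_dvd one_pos h
    have h2 := p_gt3 (idx j a)
    omega
  -- the three counting facts F1_a : #{d : p_{i_a} | e_d} = 2
  have hiff0 : ∀ e : ℕ, (p (idx j 0) * p (idx j 1) * p (idx j 2)
      ∣ e * (p (idx j 1) * p (idx j 2)) ↔ p (idx j 0) ∣ e) := by
    intro e
    rw [show p (idx j 0) * p (idx j 1) * p (idx j 2)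
        = p (idx j 0) * (p (idx j 1) * p (idx j 2)) from by ring]
    exact Nat.mul_dvd_mul_iff_right (Nat.mul_pos (p_pos _) (p_pos _))
  have hiff1 : ∀ e : ℕ, (p (idx j 0) * p (idx j 1) * p (idx j 2)
      ∣ e * (p (idx j 0) * p (idx j 2)) ↔ p (idx j 1) ∣ e) := by
    intro e
    rw [show p (idx j 0) * p (idx j 1) * p (idx j 2)
        = p (idx j 1) * (p (idx j 0) * p (idx j 2)) from by ring]
    exact Nat.mul_dvd_mul_iff_right (Nat.mul_pos (p_pos _) (p_pos _))
  have hiff2 : ∀ e : ℕ, (p (idx j 0) * p (idx j 1) * p (idx j 2)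
      ∣ e * (p (idx j 0) * p (idx j 1)) ↔ p (idx j 2) ∣ e) := by
    intro e
    rw [show p (idx j 0) * p (idx j 1) * p (idx j 2)
        = p (idx j 2) * (p (idx j 0) * p (idx j 1)) from by ring]
    exact Nat.mul_dvd_mul_iff_right (Nat.mul_pos (p_pos _) (p_pos _))
  have F1_0 : (∑ d : Fin 6, if p (idx j 0) ∣ (s j d.val * x1 + t j * x2) then 1 else 0) = 2 := by
    have h := EXT (p (idx j 1) * p (idx j 2)) (Nat.Coprime.mul_right (copQPa 1) (copQPa 2))
    have hR : (∑ d : Fin 6, if p (idx j 0) * p (idx j 1) * p (idx j 2) ∣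
        (![p (idx j 0) * p (idx j 1) * p (idx j 2),
          p (idx j 0), p (idx j 1), p (idx j 2), 1, 1] d)
        * (p (idx j 1) * p (idx j 2)) then 1 else 0) = 2 := by
      rw [Fin.sum_univ_six]
      show (if p (idx j 0) * p (idx j 1) * p (idx j 2) ∣
            (p (idx j 0) * p (idx j 1) * p (idx j 2)) * (p (idx j 1) * p (idx j 2)) then 1 else 0)
        + (if p (idx j 0) * p (idx j 1) * p (idx j 2) ∣
            p (idx j 0) * (p (idx j 1) * p (idx j 2)) then 1 else 0)
        + (if p (idx j 0) * p (idx j 1) * p (idx j 2) ∣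
            p (idx j 1) * (p (idx j 1) * p (idx j 2)) then 1 else 0)
        + (if p (idx j 0) * p (idx j 1) * p (idx j 2) ∣
            p (idx j 2) * (p (idx j 1) * p (idx j 2)) then 1 else 0)
        + (if p (idx j 0) * p (idx j 1) * p (idx j 2) ∣
            1 * (p (idx j 1) * p (idx j 2)) then 1 else 0)
        + (if p (idx j 0) * p (idx j 1) * p (idx j 2) ∣
            1 * (p (idx j 1) * p (idx j 2)) then 1 else 0) = 2
      rw [if_pos (dvd_mul_right _ _), if_pos ((hiff0 _).2 dvd_rfl),
        if_neg (fun hc => pnd 0 1 (by decide) ((hiff0 _).1 hc)),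
        if_neg (fun hc => pnd 0 2 (by decide) ((hiff0 _).1 hc)),
        if_neg (fun hc => pnd1 0 ((hiff0 _).1 hc))]
    refine Eq.trans ?_ (h.trans hR)
    exact Finset.sum_congr rfl fun d _ => if_congr
      ⟨fun hh => ⟨(hiff0 _).2 hh, F0 d⟩, fun hh => (hiff0 _).1 hh.1⟩ rfl rfl
  have F1_1 : (∑ d : Fin 6, if p (idx j 1) ∣ (s j d.val * x1 + t j * x2) then 1 else 0) = 2 := by
    have h := EXT (p (idx j 0) * p (idx j 2)) (Nat.Coprime.mul_right (copQPa 0) (copQPa 2))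
    have hR : (∑ d : Fin 6, if p (idx j 0) * p (idx j 1) * p (idx j 2) ∣
        (![p (idx j 0) * p (idx j 1) * p (idx j 2),
          p (idx j 0), p (idx j 1), p (idx j 2), 1, 1] d)
        * (p (idx j 0) * p (idx j 2)) then 1 else 0) = 2 := by
      rw [Fin.sum_univ_six]
      show (if p (idx j 0) * p (idx j 1) * p (idx j 2) ∣
            (p (idx j 0) * p (idx j 1) * p (idx j 2)) * (p (idx j 0) * p (idx j 2)) then 1 else 0)
        + (if p (idx j 0) * p (idx j 1) * p (idx j 2) ∣
            p (idx j 0) * (p (idx j 0) * p (idx j 2)) then 1 else 0)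
        + (if p (idx j 0) * p (idx j 1) * p (idx j 2) ∣
            p (idx j 1) * (p (idx j 0) * p (idx j 2)) then 1 else 0)
        + (if p (idx j 0) * p (idx j 1) * p (idx j 2) ∣
            p (idx j 2) * (p (idx j 0) * p (idx j 2)) then 1 else 0)
        + (if p (idx j 0) * p (idx j 1) * p (idx j 2) ∣
            1 * (p (idx j 0) * p (idx j 2)) then 1 else 0)
        + (if p (idx j 0) * p (idx j 1) * p (idx j 2) ∣
            1 * (p (idx j 0) * p (idx j 2)) then 1 else 0) = 2
      rw [if_pos (dvd_mul_right _ _),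
        if_neg (fun hc => pnd 1 0 (by decide) ((hiff1 _).1 hc)),
        if_pos ((hiff1 _).2 dvd_rfl),
        if_neg (fun hc => pnd 1 2 (by decide) ((hiff1 _).1 hc)),
        if_neg (fun hc => pnd1 1 ((hiff1 _).1 hc))]
    refine Eq.trans ?_ (h.trans hR)
    exact Finset.sum_congr rfl fun d _ => if_congr
      ⟨fun hh => ⟨(hiff1 _).2 hh, F0 d⟩, fun hh => (hiff1 _).1 hh.1⟩ rfl rfl
  have F1_2 : (∑ d : Fin 6, if p (idx j 2) ∣ (s j d.val * x1 + t j * x2) then 1 else 0) = 2 := by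
    have h := EXT (p (idx j 0) * p (idx j 1)) (Nat.Coprime.mul_right (copQPa 0) (copQPa 1))
    have hR : (∑ d : Fin 6, if p (idx j 0) * p (idx j 1) * p (idx j 2) ∣
        (![p (idx j 0) * p (idx j 1) * p (idx j 2),
          p (idx j 0), p (idx j 1), p (idx j 2), 1, 1] d)
        * (p (idx j 0) * p (idx j 1)) then 1 else 0) = 2 := by
      rw [Fin.sum_univ_six]
      show (if p (idx j 0) * p (idx j 1) * p (idx j 2) ∣
            (p (idx j 0) * p (idx j 1) * p (idx j 2)) * (p (idx j 0) * p (idx j 1)) then 1 else 0)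
        + (if p (idx j 0) * p (idx j 1) * p (idx j 2) ∣
            p (idx j 0) * (p (idx j 0) * p (idx j 1)) then 1 else 0)
        + (if p (idx j 0) * p (idx j 1) * p (idx j 2) ∣
            p (idx j 1) * (p (idx j 0) * p (idx j 1)) then 1 else 0)
        + (if p (idx j 0) * p (idx j 1) * p (idx j 2) ∣
            p (idx j 2) * (p (idx j 0) * p (idx j 1)) then 1 else 0)
        + (if p (idx j 0) * p (idx j 1) * p (idx j 2) ∣
            1 * (p (idx j 0) * p (idx j 1)) then 1 else 0)
        + (if p (idx j 0) * p (idx j 1) * p (idx j 2) ∣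
            1 * (p (idx j 0) * p (idx j 1)) then 1 else 0) = 2
      rw [if_pos (dvd_mul_right _ _),
        if_neg (fun hc => pnd 2 0 (by decide) ((hiff2 _).1 hc)),
        if_neg (fun hc => pnd 2 1 (by decide) ((hiff2 _).1 hc)),
        if_pos ((hiff2 _).2 dvd_rfl),
        if_neg (fun hc => pnd1 2 ((hiff2 _).1 hc))]
    refine Eq.trans ?_ (h.trans hR)
    exact Finset.sum_congr rfl fun d _ => if_congr
      ⟨fun hh => ⟨(hiff2 _).2 hh, F0 d⟩, fun hh => (hiff2 _).1 hh.1⟩ rfl rfl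
  -- existence of a triply-divisible exponent
  have hP3nd : ∀ a : Fin 3, ¬ p (idx j 0) * p (idx j 1) * p (idx j 2) ∣ p (idx j a) := by
    intro a hdvd
    have hd0 : p (idx j 0) ∣ p (idx j a) := (hUdvd 1).trans hdvd
    have hd1 : p (idx j 1) ∣ p (idx j a) := (hUdvd 2).trans hdvd
    have he0 := (Nat.prime_dvd_prime_iff_eq (p_prime _) (p_prime _)).1 hd0
    have he1 := (Nat.prime_dvd_prime_iff_eq (p_prime _) (p_prime _)).1 hd1
    exact pnd 0 1 (by decide) (by rw [he0.trans he1.symm])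
  have hP3nd1 : ¬ p (idx j 0) * p (idx j 1) * p (idx j 2) ∣ 1 := by
    intro hdvd
    exact pnd1 0 ((hUdvd 1).trans hdvd)
  have hTrip : ∃ d : Fin 6, p (idx j 0) * p (idx j 1) * p (idx j 2)
      ∣ (s j d.val * x1 + t j * x2) := by
    have h := EXT 1 (Nat.coprime_one_right _)
    have hR : (∑ d : Fin 6, if p (idx j 0) * p (idx j 1) * p (idx j 2) ∣
        (![p (idx j 0) * p (idx j 1) * p (idx j 2),
          p (idx j 0), p (idx j 1), p (idx j 2), 1, 1] d) * 1 then 1 else 0) = 1 := by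
      rw [Fin.sum_univ_six]
      show (if p (idx j 0) * p (idx j 1) * p (idx j 2) ∣
            (p (idx j 0) * p (idx j 1) * p (idx j 2)) * 1 then 1 else 0)
        + (if p (idx j 0) * p (idx j 1) * p (idx j 2) ∣ p (idx j 0) * 1 then 1 else 0)
        + (if p (idx j 0) * p (idx j 1) * p (idx j 2) ∣ p (idx j 1) * 1 then 1 else 0)
        + (if p (idx j 0) * p (idx j 1) * p (idx j 2) ∣ p (idx j 2) * 1 then 1 else 0)
        + (if p (idx j 0) * p (idx j 1) * p (idx j 2) ∣ 1 * 1 then 1 else 0)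
        + (if p (idx j 0) * p (idx j 1) * p (idx j 2) ∣ 1 * 1 then 1 else 0) = 1
      rw [if_pos (dvd_mul_right _ _),
        if_neg (fun hc => hP3nd 0 (by rwa [mul_one] at hc)),
        if_neg (fun hc => hP3nd 1 (by rwa [mul_one] at hc)),
        if_neg (fun hc => hP3nd 2 (by rwa [mul_one] at hc)),
        if_neg (fun hc => hP3nd1 (by rwa [mul_one] at hc))]
    obtain ⟨d, hd⟩ := sum6_exists (h.trans hR)
    exact ⟨d, by have h1 := hd.1; rwa [mul_one] at h1⟩
  -- ZMod conversions
  have tcast : ∀ b : Fin 3, ((t j : ℕ) : ZMod (p (idx j b))) = 1 := by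
    intro b
    have h1 : t j % p (idx j b) = 1 % p (idx j b) := by
      rw [htp j b, Nat.mod_eq_of_lt (by have := p_gt3 (idx j b); omega)]
    have h2 := (ZMod.natCast_eq_natCast_iff _ _ _).2 h1
    simpa using h2
  have condElem : ∀ (b : Fin 3) (dv M : ℕ),
      ((s j dv : ℕ) : ZMod (p (idx j b))) = -((M : ℕ) : ZMod (p (idx j b))) →
      ((p (idx j b) ∣ (s j dv * x1 + t j * x2)) ↔
        ((x2 : ZMod (p (idx j b))) = ((M : ℕ) : ZMod (p (idx j b))) * (x1 : ZMod (p (idx j b))))) := by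
    intro b dv M hs
    rw [← ZMod.natCast_eq_zero_iff]
    rw [Nat.cast_add, Nat.cast_mul, Nat.cast_mul, hs, tcast b]
    constructor
    · intro h; linear_combination h
    · intro h; linear_combination h
  have sdiag : ∀ b : Fin 3, ((s j b.val : ℕ) : ZMod (p (idx j b)))
      = -(((1 : ℕ) : ℕ) : ZMod (p (idx j b))) := by
    intro b
    have h0 := hs1 j b b
    rw [if_pos rfl] at h0
    exact zcast_of_mod h0
  have soff : ∀ a b : Fin 3, a ≠ b →
      ((s j a.val : ℕ) : ZMod (p (idx j b))) = -(((0 : ℕ) : ℕ) : ZMod (p (idx j b))) := by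
    intro a b hab
    have h0 := hs1 j a b
    rw [if_neg hab] at h0
    exact zcast_of_mod h0
  have s2cast : ∀ c b : Fin 3, ((s j (3 + c.val) : ℕ) : ZMod (p (idx j b)))
      = -(((1 + (3 + b.val - c.val) % 3 : ℕ)) : ZMod (p (idx j b))) := fun c b =>
    zcast_of_mod (hs2 j c b)
  have H0 : (x1 : ZMod (p (idx j 0))) ≠ 0 ∧
      ((x2 : ZMod (p (idx j 0))) = 0 ∨ (x2 : ZMod (p (idx j 0))) = (x1 : ZMod (p (idx j 0)))) := by
    have h := F1_0
    rw [Fin.sum_univ_six] at h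
    rw [if_congr (condElem 0 (0 : Fin 6).val 1 (sdiag 0)) rfl rfl,
        if_congr (condElem 0 (1 : Fin 6).val 0 (soff 1 0 (by decide))) rfl rfl,
        if_congr (condElem 0 (2 : Fin 6).val 0 (soff 2 0 (by decide))) rfl rfl,
        if_congr (condElem 0 (3 : Fin 6).val 1 (s2cast 0 0)) rfl rfl,
        if_congr (condElem 0 (4 : Fin 6).val 3 (s2cast 1 0)) rfl rfl,
        if_congr (condElem 0 (5 : Fin 6).val 2 (s2cast 2 0)) rfl rfl] at h
    simp only [Nat.cast_zero, Nat.cast_one, Nat.cast_ofNat, zero_mul, one_mul] at h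
    exact dichotomy (p_prime _) (p_gt3 _) _ _ (by linarith [h])
  have H1 : (x1 : ZMod (p (idx j 1))) ≠ 0 ∧
      ((x2 : ZMod (p (idx j 1))) = 0 ∨ (x2 : ZMod (p (idx j 1))) = (x1 : ZMod (p (idx j 1)))) := by
    have h := F1_1
    rw [Fin.sum_univ_six] at h
    rw [if_congr (condElem 1 (0 : Fin 6).val 0 (soff 0 1 (by decide))) rfl rfl,
        if_congr (condElem 1 (1 : Fin 6).val 1 (sdiag 1)) rfl rfl,
        if_congr (condElem 1 (2 : Fin 6).val 0 (soff 2 1 (by decide))) rfl rfl,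
        if_congr (condElem 1 (3 : Fin 6).val 2 (s2cast 0 1)) rfl rfl,
        if_congr (condElem 1 (4 : Fin 6).val 1 (s2cast 1 1)) rfl rfl,
        if_congr (condElem 1 (5 : Fin 6).val 3 (s2cast 2 1)) rfl rfl] at h
    simp only [Nat.cast_zero, Nat.cast_one, Nat.cast_ofNat, zero_mul, one_mul] at h
    exact dichotomy (p_prime _) (p_gt3 _) _ _ (by linarith [h])
  have H2 : (x1 : ZMod (p (idx j 2))) ≠ 0 ∧
      ((x2 : ZMod (p (idx j 2))) = 0 ∨ (x2 : ZMod (p (idx j 2))) = (x1 : ZMod (p (idx j 2)))) := by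
    have h := F1_2
    rw [Fin.sum_univ_six] at h
    rw [if_congr (condElem 2 (0 : Fin 6).val 0 (soff 0 2 (by decide))) rfl rfl,
        if_congr (condElem 2 (1 : Fin 6).val 0 (soff 1 2 (by decide))) rfl rfl,
        if_congr (condElem 2 (2 : Fin 6).val 1 (sdiag 2)) rfl rfl,
        if_congr (condElem 2 (3 : Fin 6).val 3 (s2cast 0 2)) rfl rfl,
        if_congr (condElem 2 (4 : Fin 6).val 2 (s2cast 1 2)) rfl rfl,
        if_congr (condElem 2 (5 : Fin 6).val 1 (s2cast 2 2)) rfl rfl] at h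
    simp only [Nat.cast_zero, Nat.cast_one, Nat.cast_ofNat, zero_mul, one_mul] at h
    exact dichotomy (p_prime _) (p_gt3 _) _ _ (by linarith [h])
  -- helpers for the final case analysis
  have hx2zero : ∀ b : Fin 3, ((x2 : ZMod (p (idx j b))) = 0) → p (idx j b) ∣ x2 :=
    fun b hb => (ZMod.natCast_eq_zero_iff _ _).1 hb
  have hx2nz : ∀ b : Fin 3, ((x2 : ZMod (p (idx j b))) ≠ 0) → ¬ p (idx j b) ∣ x2 :=
    fun b hb hdvd => hb ((ZMod.natCast_eq_zero_iff _ _).2 hdvd)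
  have hM2 : ∀ b : Fin 3, ((x1 : ZMod (p (idx j b))) ≠ 0) →
      ((x2 : ZMod (p (idx j b))) = 0 ∨ (x2 : ZMod (p (idx j b))) = (x1 : ZMod (p (idx j b)))) →
      ((x2 : ZMod (p (idx j b))) = ((2 : ℕ) : ZMod (p (idx j b))) * (x1 : ZMod (p (idx j b))))
      → False := by
    intro b hx1 hcases hT
    haveI : Fact (p (idx j b)).Prime := ⟨p_prime _⟩
    rcases hcases with hcc | hcc
    · rw [hcc] at hT
      rcases mul_eq_zero.1 hT.symm with h2 | h2
      · exact two_ne_zero_zmod (p_gt3 (idx j b)) (by exact_mod_cast h2)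
      · exact hx1 h2
    · rw [hcc] at hT
      refine hx1 ?_
      push_cast at hT
      linear_combination -hT
  obtain ⟨d0, hdP3⟩ := hTrip
  have hd0 : p (idx j 0) ∣ (s j d0.val * x1 + t j * x2) := (hUdvd 1).trans hdP3
  have hd1 : p (idx j 1) ∣ (s j d0.val * x1 + t j * x2) := (hUdvd 2).trans hdP3
  have hd2 : p (idx j 2) ∣ (s j d0.val * x1 + t j * x2) := (hUdvd 3).trans hdP3
  rcases d0 with ⟨dv, hdv⟩
  interval_cases dv
  · -- d* = 0 : witness a = 0
    have T0 : (x2 : ZMod (p (idx j 0))) = ((1 : ℕ) : ZMod (p (idx j 0))) * x1 :=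
      (condElem 0 0 1 (sdiag 0)).1 hd0
    have T1 : (x2 : ZMod (p (idx j 1))) = ((0 : ℕ) : ZMod (p (idx j 1))) * x1 :=
      (condElem 1 0 0 (soff 0 1 (by decide))).1 hd1
    have T2 : (x2 : ZMod (p (idx j 2))) = ((0 : ℕ) : ZMod (p (idx j 2))) * x1 :=
      (condElem 2 0 0 (soff 0 2 (by decide))).1 hd2
    have hnot : ¬ p (idx j 0) ∣ x2 := hx2nz 0 (by
      rw [T0]; push_cast; rw [one_mul]; exact H0.1)
    have hdva : p (idx j 1) ∣ x2 := hx2zero 1 (by rw [T1]; simp)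
    have hdvb : p (idx j 2) ∣ x2 := hx2zero 2 (by rw [T2]; simp)
    have hall : ∀ b : Fin 3, b ≠ 0 → p (idx j b) ∣ x2 := by
      intro b hb
      fin_cases b
      · exact absurd rfl hb
      · exact hdva
      · exact hdvb
    exact ⟨0, ⟨hnot, hall⟩, fun y hy => by
      by_contra hne
      exact hy.1 (hall y hne)⟩
  · -- d* = 1 : witness a = 1
    have T0 : (x2 : ZMod (p (idx j 0))) = ((0 : ℕ) : ZMod (p (idx j 0))) * x1 :=
      (condElem 0 1 0 (soff 1 0 (by decide))).1 hd0
    have T1 : (x2 : ZMod (p (idx j 1))) = ((1 : ℕ) : ZMod (p (idx j 1))) * x1 :=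
      (condElem 1 1 1 (sdiag 1)).1 hd1
    have T2 : (x2 : ZMod (p (idx j 2))) = ((0 : ℕ) : ZMod (p (idx j 2))) * x1 :=
      (condElem 2 1 0 (soff 1 2 (by decide))).1 hd2
    have hnot : ¬ p (idx j 1) ∣ x2 := hx2nz 1 (by
      rw [T1]; push_cast; rw [one_mul]; exact H1.1)
    have hdva : p (idx j 0) ∣ x2 := hx2zero 0 (by rw [T0]; simp)
    have hdvb : p (idx j 2) ∣ x2 := hx2zero 2 (by rw [T2]; simp)
    have hall : ∀ b : Fin 3, b ≠ 1 → p (idx j b) ∣ x2 := by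
      intro b hb
      fin_cases b
      · exact hdva
      · exact absurd rfl hb
      · exact hdvb
    exact ⟨1, ⟨hnot, hall⟩, fun y hy => by
      by_contra hne
      exact hy.1 (hall y hne)⟩
  · -- d* = 2 : witness a = 2
    have T0 : (x2 : ZMod (p (idx j 0))) = ((0 : ℕ) : ZMod (p (idx j 0))) * x1 :=
      (condElem 0 2 0 (soff 2 0 (by decide))).1 hd0
    have T1 : (x2 : ZMod (p (idx j 1))) = ((0 : ℕ) : ZMod (p (idx j 1))) * x1 :=
      (condElem 1 2 0 (soff 2 1 (by decide))).1 hd1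
    have T2 : (x2 : ZMod (p (idx j 2))) = ((1 : ℕ) : ZMod (p (idx j 2))) * x1 :=
      (condElem 2 2 1 (sdiag 2)).1 hd2
    have hnot : ¬ p (idx j 2) ∣ x2 := hx2nz 2 (by
      rw [T2]; push_cast; rw [one_mul]; exact H2.1)
    have hdva : p (idx j 0) ∣ x2 := hx2zero 0 (by rw [T0]; simp)
    have hdvb : p (idx j 1) ∣ x2 := hx2zero 1 (by rw [T1]; simp)
    have hall : ∀ b : Fin 3, b ≠ 2 → p (idx j b) ∣ x2 := by
      intro b hb
      fin_cases b
      · exact hdva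
      · exact hdvb
      · exact absurd rfl hb
    exact ⟨2, ⟨hnot, hall⟩, fun y hy => by
      by_contra hne
      exact hy.1 (hall y hne)⟩
  · -- d* = 3 : impossible (x2 ≡ 2 x1 mod p_{i_2})
    exact (hM2 1 H1.1 H1.2 ((condElem 1 3 2 (s2cast 0 1)).1 hd1)).elim
  · -- d* = 4 : impossible (x2 ≡ 2 x1 mod p_{i_3})
    exact (hM2 2 H2.1 H2.2 ((condElem 2 4 2 (s2cast 1 2)).1 hd2)).elim
  · -- d* = 5 : impossible (x2 ≡ 2 x1 mod p_{i_1})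
    exact (hM2 0 H0.1 H0.2 ((condElem 0 5 2 (s2cast 2 0)).1 hd0)).elim

end HittingSet
end
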